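/- arXiv:1109.4430 — 2 statements merged into one kernel-verified Lean document; each statement's English description precedes it below -/
import Mathlib

section
/- Let A be a p × n integer matrix and suppose its Smith normal form S = U A V (with U ∈ GL(p, ℤ) and V ∈ GL(n, ℤ) unimodular and S diagonal) has nonzero diagonal entries s₁, …, s_r (so A has rank r). Then the topological group G = { m ∈ ℝⁿ : A m ∈ ℤᵖ } / ℤⁿ is isomorphic, as a topological group, to (ℝ/ℤ)^{n−r} × ℤ/s₁ℤ × ⋯ × ℤ/s_rℤ. -/
/-- The integer lattice ℤⁿ as an additive subgroup of ℝⁿ. -/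
def intLattice (n : ℕ) : AddSubgroup (Fin n → ℝ) where
  carrier := {v | ∀ i, ∃ k : ℤ, v i = (k : ℝ)}
  zero_mem' := fun _ => ⟨0, by simp⟩
  add_mem' := by
    intro a b ha hb i
    obtain ⟨k, hk⟩ := ha i
    obtain ⟨l, hl⟩ := hb i
    exact ⟨k + l, by simp [hk, hl]⟩
  neg_mem' := by
    intro a ha i
    obtain ⟨k, hk⟩ := ha i
    exact ⟨-k, by simp [hk]⟩

/-- The torus ℝⁿ/ℤⁿ. -/
abbrev Torus (n : ℕ) : Type := (Fin n → ℝ) ⧸ intLattice n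

/-- The subgroup { m ∈ ℝⁿ : A m ∈ ℤᵖ } of ℝⁿ, for an integer p × n matrix A. -/
def preG (p n : ℕ) (A : Matrix (Fin p) (Fin n) ℤ) : AddSubgroup (Fin n → ℝ) :=
  (intLattice p).comap (Matrix.mulVecLin (A.map (fun x : ℤ => (x : ℝ)))).toAddMonoidHom

/-- G = { m ∈ ℝⁿ : A m ∈ ℤᵖ } / ℤⁿ as a subgroup of the torus ℝⁿ/ℤⁿ. -/
def G (p n : ℕ) (A : Matrix (Fin p) (Fin n) ℤ) : AddSubgroup (Torus n) :=
  (preG p n A).map (QuotientAddGroup.mk' (intLattice n))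

/-- ZMod k carries the discrete topology. -/
instance (k : ℕ) : TopologicalSpace (ZMod k) := ⊥
instance (k : ℕ) : DiscreteTopology (ZMod k) := ⟨rfl⟩

namespace SNFaux

noncomputable section

open Matrix QuotientAddGroup

/-- real cast of an integer matrix -/
def rmat {a b : ℕ} (M : Matrix (Fin a) (Fin b) ℤ) : Matrix (Fin a) (Fin b) ℝ :=
  M.map (fun x : ℤ => (x : ℝ))

lemma rmat_mul {a b c : ℕ} (M : Matrix (Fin a) (Fin b) ℤ) (N : Matrix (Fin b) (Fin c) ℤ) :
    rmat (M * N) = rmat M * rmat N :=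
  M.map_mul (f := Int.castRingHom ℝ)

lemma rmat_one {a : ℕ} : rmat (1 : Matrix (Fin a) (Fin a) ℤ) = 1 :=
  Matrix.map_one _ (by simp) (by simp)

lemma mem_intLattice {n : ℕ} {x : Fin n → ℝ} :
    x ∈ intLattice n ↔ ∀ i, ∃ k : ℤ, x i = (k : ℝ) := Iff.rfl

lemma mem_preG {p n : ℕ} {A : Matrix (Fin p) (Fin n) ℤ} {x : Fin n → ℝ} :
    x ∈ preG p n A ↔ (rmat A).mulVec x ∈ intLattice p := Iff.rfl

lemma mulVec_int_mem {a b : ℕ} (M : Matrix (Fin a) (Fin b) ℤ) {x : Fin b → ℝ}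
    (hx : x ∈ intLattice b) : (rmat M).mulVec x ∈ intLattice a := by
  intro i
  choose y hy using hx
  refine ⟨∑ j, M i j * y j, ?_⟩
  simp only [Matrix.mulVec, dotProduct, rmat, Matrix.map_apply]
  push_cast
  exact Finset.sum_congr rfl fun j _ => by rw [hy j]

lemma intLattice_le_preG {p n : ℕ} (A : Matrix (Fin p) (Fin n) ℤ) :
    intLattice n ≤ preG p n A := fun x hx => mulVec_int_mem A hx

end

end SNFaux

namespace SNFaux
noncomputable section
open Matrix QuotientAddGroup

variable {p n r : ℕ}

def idxF (hrn : r ≤ n) (k : Fin r) : Fin n := ⟨k, lt_of_lt_of_le k.2 hrn⟩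
def idxP (hrp : r ≤ p) (k : Fin r) : Fin p := ⟨k, lt_of_lt_of_le k.2 hrp⟩
def idxT (j : Fin (n - r)) : Fin n := ⟨r + j, by have := j.2; omega⟩

def zvec (s : Fin r → ℤ) (u : Fin (n - r) → ℝ) (m : Fin r → ℤ) : Fin n → ℝ :=
  fun i => if h : (i : ℕ) < r then (m ⟨i, h⟩ : ℝ) / (s ⟨i, h⟩ : ℝ)
    else u ⟨(i : ℕ) - r, by have := i.2; omega⟩

lemma zvec_idxF (hrn : r ≤ n) (s : Fin r → ℤ) (u : Fin (n - r) → ℝ) (m : Fin r → ℤ)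
    (k : Fin r) : zvec s u m (idxF hrn k) = (m k : ℝ) / (s k : ℝ) := by
  simp only [zvec, idxF]
  exact dif_pos k.2

lemma zvec_idxT (s : Fin r → ℤ) (u : Fin (n - r) → ℝ) (m : Fin r → ℤ)
    (j : Fin (n - r)) : zvec s u m (idxT j) = u j := by
  simp only [zvec, idxT]
  refine (dif_neg (show ¬ (r + (j : ℕ) < r) by omega)).trans ?_
  congr 1
  ext
  simp

end
end SNFaux

namespace SNFaux
noncomputable section
open Matrix QuotientAddGroup

variable {p n r : ℕ}

lemma diag_mulVec {S : Matrix (Fin p) (Fin n) ℤ}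
    (hdiag : ∀ (i : Fin p) (j : Fin n), (i : ℕ) ≠ (j : ℕ) → S i j = 0)
    (hrp : r ≤ p) (hrn : r ≤ n) (s : Fin r → ℤ)
    (hSs : ∀ k : Fin r, S ⟨k, lt_of_lt_of_le k.2 hrp⟩ ⟨k, lt_of_lt_of_le k.2 hrn⟩ = s k)
    (hzero : ∀ (i : Fin p) (j : Fin n), (i : ℕ) = (j : ℕ) → r ≤ (i : ℕ) → S i j = 0)
    (z : Fin n → ℝ) (i : Fin p) :
    (rmat S).mulVec z i =
      if h : (i : ℕ) < r then (s ⟨i, h⟩ : ℝ) * z ⟨i, lt_of_lt_of_le h hrn⟩ else 0 := by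
  have hexp : (rmat S).mulVec z i = ∑ j, (S i j : ℝ) * z j := by
    simp [Matrix.mulVec, dotProduct, rmat]
  by_cases h : (i : ℕ) < r
  · rw [dif_pos h, hexp]
    rw [Finset.sum_eq_single (⟨(i : ℕ), lt_of_lt_of_le h hrn⟩ : Fin n)]
    · exact congrArg (· * _) (congrArg Int.cast (hSs ⟨(i : ℕ), h⟩))
    · intro j _ hj
      have : (i : ℕ) ≠ (j : ℕ) := fun hc => hj (by ext; exact hc.symm)
      rw [hdiag i j this]; simp
    · simp
  · rw [dif_neg h, hexp]
    apply Finset.sum_eq_zero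
    intro j _
    by_cases hij : (i : ℕ) = (j : ℕ)
    · rw [hzero i j hij (le_of_not_gt h)]; simp
    · rw [hdiag i j hij]; simp

end
end SNFaux

namespace SNFaux
noncomputable section
open Matrix QuotientAddGroup

variable {p n r : ℕ}

lemma preG_backward {A : Matrix (Fin p) (Fin n) ℤ}
    {U : Matrix.GeneralLinearGroup (Fin p) ℤ} {V : Matrix.GeneralLinearGroup (Fin n) ℤ}
    {S : Matrix (Fin p) (Fin n) ℤ}
    (hS : S = (U : Matrix (Fin p) (Fin p) ℤ) * A * (V : Matrix (Fin n) (Fin n) ℤ))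
    (hdiag : ∀ (i : Fin p) (j : Fin n), (i : ℕ) ≠ (j : ℕ) → S i j = 0)
    (hrp : r ≤ p) (hrn : r ≤ n) (s : Fin r → ℤ)
    (hSs : ∀ k : Fin r, S ⟨k, lt_of_lt_of_le k.2 hrp⟩ ⟨k, lt_of_lt_of_le k.2 hrn⟩ = s k)
    (hzero : ∀ (i : Fin p) (j : Fin n), (i : ℕ) = (j : ℕ) → r ≤ (i : ℕ) → S i j = 0)
    {z : Fin n → ℝ} (hz : ∀ k : Fin r, ∃ m : ℤ, (s k : ℝ) * z (idxF hrn k) = m) :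
    (rmat ((V : Matrix (Fin n) (Fin n) ℤ))).mulVec z ∈ preG p n A := by
  have hAV : A * (V : Matrix (Fin n) (Fin n) ℤ) =
      ((U⁻¹ : Matrix.GeneralLinearGroup (Fin p) ℤ) : Matrix (Fin p) (Fin p) ℤ) * S := by
    rw [hS, Matrix.mul_assoc ((U : Matrix (Fin p) (Fin p) ℤ)) A ((V : Matrix (Fin n) (Fin n) ℤ)),
      ← Matrix.mul_assoc]
    simp
  rw [mem_preG, Matrix.mulVec_mulVec, ← rmat_mul, hAV, rmat_mul, ← Matrix.mulVec_mulVec]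
  apply mulVec_int_mem
  rw [mem_intLattice]
  intro i
  rw [diag_mulVec hdiag hrp hrn s hSs hzero]
  by_cases h : (i : ℕ) < r
  · rw [dif_pos h]
    exact hz ⟨(i : ℕ), h⟩
  · rw [dif_neg h]
    exact ⟨0, by simp⟩

lemma preG_forward {A : Matrix (Fin p) (Fin n) ℤ}
    {U : Matrix.GeneralLinearGroup (Fin p) ℤ} {V : Matrix.GeneralLinearGroup (Fin n) ℤ}
    {S : Matrix (Fin p) (Fin n) ℤ}
    (hS : S = (U : Matrix (Fin p) (Fin p) ℤ) * A * (V : Matrix (Fin n) (Fin n) ℤ))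
    (hdiag : ∀ (i : Fin p) (j : Fin n), (i : ℕ) ≠ (j : ℕ) → S i j = 0)
    (hrp : r ≤ p) (hrn : r ≤ n) (s : Fin r → ℤ)
    (hSs : ∀ k : Fin r, S ⟨k, lt_of_lt_of_le k.2 hrp⟩ ⟨k, lt_of_lt_of_le k.2 hrn⟩ = s k)
    (hzero : ∀ (i : Fin p) (j : Fin n), (i : ℕ) = (j : ℕ) → r ≤ (i : ℕ) → S i j = 0)
    {x : Fin n → ℝ} (hx : x ∈ preG p n A) (k : Fin r) :
    ∃ m : ℤ, (s k : ℝ) *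
      ((rmat ((V⁻¹ : Matrix.GeneralLinearGroup (Fin n) ℤ) : Matrix (Fin n) (Fin n) ℤ)).mulVec x)
        (idxF hrn k) = m := by
  have hSV : S * ((V⁻¹ : Matrix.GeneralLinearGroup (Fin n) ℤ) : Matrix (Fin n) (Fin n) ℤ) =
      (U : Matrix (Fin p) (Fin p) ℤ) * A := by
    rw [hS, Matrix.mul_assoc]
    simp
  have hmem : (rmat S).mulVec
      ((rmat ((V⁻¹ : Matrix.GeneralLinearGroup (Fin n) ℤ) : Matrix (Fin n) (Fin n) ℤ)).mulVec x)
      ∈ intLattice p := by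
    rw [Matrix.mulVec_mulVec, ← rmat_mul, hSV, rmat_mul, ← Matrix.mulVec_mulVec]
    exact mulVec_int_mem _ hx
  obtain ⟨m, hm⟩ := hmem (idxP hrp k)
  refine ⟨m, ?_⟩
  rw [diag_mulVec hdiag hrp hrn s hSs hzero] at hm
  rw [dif_pos (show ((idxP hrp k : Fin p) : ℕ) < r from k.2)] at hm
  exact hm

end
end SNFaux

namespace SNFaux
noncomputable section
open Matrix QuotientAddGroup

variable {p n r : ℕ}

/-- x ↦ mk (V' *ᵥ Pi.single i x) as an additive hom. -/
def coordHom (V' : Matrix (Fin n) (Fin n) ℝ) (i : Fin n) : ℝ →+ Torus n :=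
  (QuotientAddGroup.mk' (intLattice n)).comp
    ((Matrix.mulVecLin V').toAddMonoidHom.comp (AddMonoidHom.single (fun _ : Fin n => ℝ) i))

lemma coordHom_apply (V' : Matrix (Fin n) (Fin n) ℝ) (i : Fin n) (x : ℝ) :
    coordHom V' i x = QuotientAddGroup.mk (V'.mulVec (Pi.single i x)) := by
  simp [coordHom, QuotientAddGroup.mk'_apply]

lemma single_int_mem (i : Fin n) (k : ℤ) : Pi.single (M := fun _ : Fin n => ℝ) i (k : ℝ) ∈ intLattice n := by
  intro j
  refine ⟨if j = i then k else 0, ?_⟩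
  rw [Pi.single_apply]
  split <;> simp

lemma coordHom_int (V : Matrix.GeneralLinearGroup (Fin n) ℤ) (i : Fin n) (k : ℤ) :
    coordHom (rmat (V : Matrix (Fin n) (Fin n) ℤ)) i (k : ℝ) = 0 := by
  rw [coordHom_apply, QuotientAddGroup.eq_zero_iff]
  exact mulVec_int_mem _ (single_int_mem i k)

/-- AddCircle 1 → Torus n, t ↦ mk (V' *ᵥ single (idxT j) t). -/
def iotaHom (V : Matrix.GeneralLinearGroup (Fin n) ℤ) (j : Fin (n - r)) :
    AddCircle (1 : ℝ) →+ Torus n :=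
  QuotientAddGroup.lift (AddSubgroup.zmultiples (1 : ℝ))
    (coordHom (rmat (V : Matrix (Fin n) (Fin n) ℤ)) (idxT j))
    (by
      intro x hx
      obtain ⟨k, hk⟩ := AddSubgroup.mem_zmultiples_iff.mp hx
      have hx' : x = (k : ℝ) := by rw [← hk]; simp
      rw [AddMonoidHom.mem_ker, hx']
      exact coordHom_int V _ k)

lemma iotaHom_mk (V : Matrix.GeneralLinearGroup (Fin n) ℤ) (j : Fin (n - r)) (u : ℝ) :
    iotaHom V j (u : AddCircle (1 : ℝ)) =
      coordHom (rmat (V : Matrix (Fin n) (Fin n) ℤ)) (idxT j) u := rfl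

/-- ZMod (s k).natAbs → Torus n. -/
def kappaHom (V : Matrix.GeneralLinearGroup (Fin n) ℤ) (hrn : r ≤ n) (s : Fin r → ℤ)
    (hs : ∀ k, s k ≠ 0) (k : Fin r) : ZMod (s k).natAbs →+ Torus n :=
  (QuotientAddGroup.lift (AddSubgroup.zmultiples (((s k).natAbs : ℤ)))
    ((coordHom (rmat (V : Matrix (Fin n) (Fin n) ℤ)) (idxF hrn k)).comp
      ((AddMonoidHom.mulRight ((s k : ℝ)⁻¹)).comp (Int.castAddHom ℝ)))
    (by
      intro x hx
      obtain ⟨q, hq⟩ := AddSubgroup.mem_zmultiples_iff.mp hx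
      have hdvd : s k ∣ x := by
        rw [← hq]
        simp only [zsmul_eq_mul]
        exact Dvd.dvd.mul_left (Int.dvd_natAbs.mpr dvd_rfl) q
      obtain ⟨m, hm⟩ := hdvd
      rw [AddMonoidHom.mem_ker]
      simp only [AddMonoidHom.comp_apply, Int.coe_castAddHom, AddMonoidHom.coe_mulRight]
      have : (x : ℝ) * ((s k : ℝ))⁻¹ = (m : ℝ) := by
        rw [hm]
        push_cast
        rw [mul_comm (s k : ℝ) (m : ℝ), mul_assoc]
        rw [mul_inv_cancel₀ (by exact_mod_cast hs k), mul_one]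
      rw [this]
      exact coordHom_int V _ m)).comp
    (Int.quotientZMultiplesNatEquivZMod (s k).natAbs).symm.toAddMonoidHom

lemma zmod_symm_mk (nk : ℕ) (m : ℤ) :
    (Int.quotientZMultiplesNatEquivZMod nk).symm ((m : ZMod nk)) = QuotientAddGroup.mk m := by
  rw [AddEquiv.symm_apply_eq]
  symm
  simp only [Int.quotientZMultiplesNatEquivZMod, AddEquiv.trans_apply]
  rfl

lemma kappaHom_cast (V : Matrix.GeneralLinearGroup (Fin n) ℤ) (hrn : r ≤ n) (s : Fin r → ℤ)
    (hs : ∀ k, s k ≠ 0) (k : Fin r) (m : ℤ) :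
    kappaHom V hrn s hs k ((m : ZMod (s k).natAbs)) =
      coordHom (rmat (V : Matrix (Fin n) (Fin n) ℤ)) (idxF hrn k) ((m : ℝ) * ((s k : ℝ))⁻¹) := by
  simp only [kappaHom, AddMonoidHom.comp_apply, AddEquiv.coe_toAddMonoidHom]
  rw [zmod_symm_mk]
  rfl

/-- the product group in the statement -/
abbrev P (n r : ℕ) (s : Fin r → ℤ) : Type :=
  (Fin (n - r) → AddCircle (1 : ℝ)) × ((k : Fin r) → ZMod (s k).natAbs)

/-- the main homomorphism P →+ Torus n -/
def psi (V : Matrix.GeneralLinearGroup (Fin n) ℤ) (hrn : r ≤ n) (s : Fin r → ℤ)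
    (hs : ∀ k, s k ≠ 0) : P n r s →+ Torus n :=
  (∑ j : Fin (n - r), (iotaHom V j).comp
      ((Pi.evalAddMonoidHom (fun _ : Fin (n - r) => AddCircle (1 : ℝ)) j).comp
        (AddMonoidHom.fst _ _))) +
  (∑ k : Fin r, (kappaHom V hrn s hs k).comp
      ((Pi.evalAddMonoidHom (fun k : Fin r => ZMod (s k).natAbs) k).comp
        (AddMonoidHom.snd _ _)))

lemma psi_apply_mk (V : Matrix.GeneralLinearGroup (Fin n) ℤ) (hrn : r ≤ n) (s : Fin r → ℤ)
    (hs : ∀ k, s k ≠ 0) (u : Fin (n - r) → ℝ) (m : Fin r → ℤ) :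
    psi V hrn s hs (fun j => (u j : AddCircle (1 : ℝ)), fun k => ((m k : ZMod (s k).natAbs))) =
      QuotientAddGroup.mk ((rmat (V : Matrix (Fin n) (Fin n) ℤ)).mulVec (zvec s u m)) := by
  have hvec : (∑ j : Fin (n - r), Pi.single (M := fun _ : Fin n => ℝ) (idxT j) (u j)) +
      (∑ k : Fin r, Pi.single (M := fun _ : Fin n => ℝ) (idxF hrn k) ((m k : ℝ) * ((s k : ℝ))⁻¹))
      = zvec s u m := by
    funext i
    simp only [Pi.add_apply, Finset.sum_apply, Pi.single_apply]
    by_cases h : (i : ℕ) < r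
    · have h1 : (∑ j : Fin (n - r), if i = idxT j then u j else 0) = 0 :=
        Finset.sum_eq_zero (fun j _ => if_neg (fun hc => by
          have hv : (i : ℕ) = r + (j : ℕ) := congrArg Fin.val hc
          omega))
      have h2 : (∑ k : Fin r, if i = idxF hrn k then (m k : ℝ) * ((s k : ℝ))⁻¹ else 0)
          = (m ⟨(i : ℕ), h⟩ : ℝ) * ((s ⟨(i : ℕ), h⟩ : ℝ))⁻¹ := by
        rw [Finset.sum_eq_single (⟨(i : ℕ), h⟩ : Fin r)]
        · rw [if_pos (by rw [Fin.ext_iff]; rfl)]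
        · intro k _ hk
          refine if_neg (fun hc => hk ?_)
          have hv : (i : ℕ) = (k : ℕ) := congrArg Fin.val hc
          rw [Fin.ext_iff]
          exact hv.symm
        · simp
      rw [h1, h2, zero_add, zvec, dif_pos h, div_eq_mul_inv]
    · have h2 : (∑ k : Fin r, if i = idxF hrn k then (m k : ℝ) * ((s k : ℝ))⁻¹ else 0) = 0 :=
        Finset.sum_eq_zero (fun k _ => if_neg (fun hc => by
          have hv : (i : ℕ) = (k : ℕ) := congrArg Fin.val hc
          have := k.2
          omega))
      have h1 : (∑ j : Fin (n - r), if i = idxT j then u j else 0)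
          = u ⟨(i : ℕ) - r, by have := i.2; omega⟩ := by
        rw [Finset.sum_eq_single (⟨(i : ℕ) - r, by have := i.2; omega⟩ : Fin (n - r))]
        · rw [if_pos (by rw [Fin.ext_iff]; show (i : ℕ) = r + ((i : ℕ) - r); omega)]
        · intro j _ hj
          refine if_neg (fun hc => hj ?_)
          have hv : (i : ℕ) = r + (j : ℕ) := congrArg Fin.val hc
          rw [Fin.ext_iff]
          show (j : ℕ) = (i : ℕ) - r
          omega
        · simp
      rw [h1, h2, add_zero, zvec, dif_neg h]
  calc psi V hrn s hs (fun j => (u j : AddCircle (1 : ℝ)), fun k => ((m k : ZMod (s k).natAbs)))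
      = (∑ j : Fin (n - r), coordHom (rmat (V : Matrix (Fin n) (Fin n) ℤ)) (idxT j) (u j)) +
        (∑ k : Fin r, coordHom (rmat (V : Matrix (Fin n) (Fin n) ℤ)) (idxF hrn k)
          ((m k : ℝ) * ((s k : ℝ))⁻¹)) := by
        simp only [psi, AddMonoidHom.add_apply, AddMonoidHom.finset_sum_apply,
          AddMonoidHom.comp_apply, AddMonoidHom.coe_fst, AddMonoidHom.coe_snd,
          Pi.evalAddMonoidHom_apply]
        exact congrArg₂ (· + ·)
          (Finset.sum_congr rfl fun j _ => iotaHom_mk V j (u j))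
          (Finset.sum_congr rfl fun k _ => kappaHom_cast V hrn s hs k (m k))
    _ = ((QuotientAddGroup.mk' (intLattice n)).comp
          (Matrix.mulVecLin (rmat (V : Matrix (Fin n) (Fin n) ℤ))).toAddMonoidHom)
          ((∑ j : Fin (n - r), Pi.single (M := fun _ : Fin n => ℝ) (idxT j) (u j)) +
           (∑ k : Fin r, Pi.single (M := fun _ : Fin n => ℝ) (idxF hrn k)
             ((m k : ℝ) * ((s k : ℝ))⁻¹))) := by
        rw [map_add, map_sum, map_sum]
        rfl
    _ = QuotientAddGroup.mk ((rmat (V : Matrix (Fin n) (Fin n) ℤ)).mulVec (zvec s u m)) := by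
        rw [hvec]
        rfl
end
end SNFaux

namespace SNFaux
noncomputable section
open Matrix QuotientAddGroup

variable {p n r : ℕ}

lemma continuous_mulVec {a b : ℕ} (M : Matrix (Fin a) (Fin b) ℝ) :
    Continuous fun v : Fin b → ℝ => M.mulVec v := by
  apply continuous_pi
  intro i
  simp only [Matrix.mulVec, dotProduct]
  exact continuous_finset_sum _ fun j _ => continuous_const.mul (continuous_apply j)

lemma continuous_torus_mk : Continuous (QuotientAddGroup.mk : (Fin n → ℝ) → Torus n) :=
  continuous_quot_mk

lemma continuous_coordHom (V' : Matrix (Fin n) (Fin n) ℝ) (i : Fin n) :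
    Continuous (coordHom V' i) := by
  have h1 : Continuous fun x : ℝ => Pi.single (M := fun _ : Fin n => ℝ) i x := by
    apply continuous_pi
    intro j
    by_cases h : j = i
    · subst h; simp only [Pi.single_eq_same]; exact continuous_id
    · simp only [Pi.single_eq_of_ne h]; exact continuous_const
  have : ⇑(coordHom V' i) =
      (QuotientAddGroup.mk : (Fin n → ℝ) → Torus n) ∘ (fun v => V'.mulVec v) ∘
        (fun x : ℝ => Pi.single (M := fun _ : Fin n => ℝ) i x) := by
    funext x
    simp [coordHom_apply]
  rw [this]
  exact continuous_torus_mk.comp ((continuous_mulVec V').comp h1)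

lemma isQuotientMap_addCircle_mk :
    Topology.IsQuotientMap ((↑) : ℝ → AddCircle (1 : ℝ)) :=
  IsOpenMap.isQuotientMap QuotientAddGroup.isOpenMap_coe continuous_quot_mk
    Quotient.exists_rep

lemma continuous_iotaHom (V : Matrix.GeneralLinearGroup (Fin n) ℤ) (j : Fin (n - r)) :
    Continuous (iotaHom V j) := by
  rw [isQuotientMap_addCircle_mk.continuous_iff]
  exact continuous_coordHom _ _

lemma continuous_psi (V : Matrix.GeneralLinearGroup (Fin n) ℤ) (hrn : r ≤ n) (s : Fin r → ℤ)
    (hs : ∀ k, s k ≠ 0) : Continuous (psi V hrn s hs) := by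
  have : ⇑(psi V hrn s hs) = fun q : P n r s =>
      (∑ j : Fin (n - r), iotaHom V j (q.1 j)) +
      (∑ k : Fin r, kappaHom V hrn s hs k (q.2 k)) := by
    funext q
    simp [psi, AddMonoidHom.finset_sum_apply]
  rw [this]
  apply Continuous.add
  · exact continuous_finset_sum _ fun j _ =>
      (continuous_iotaHom V j).comp ((continuous_apply j).comp continuous_fst)
  · exact continuous_finset_sum _ fun k _ =>
      (continuous_of_discreteTopology (α := ZMod (s k).natAbs)).comp
        ((continuous_apply k).comp continuous_snd)

end
end SNFaux

namespace SNFaux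
noncomputable section
open Matrix QuotientAddGroup

variable {p n r : ℕ}

lemma VW_one (V : Matrix.GeneralLinearGroup (Fin n) ℤ) :
    rmat (V : Matrix (Fin n) (Fin n) ℤ) *
      rmat ((V⁻¹ : Matrix.GeneralLinearGroup (Fin n) ℤ) : Matrix (Fin n) (Fin n) ℤ) = 1 := by
  rw [← rmat_mul]
  rw [show (V : Matrix (Fin n) (Fin n) ℤ) *
      ((V⁻¹ : Matrix.GeneralLinearGroup (Fin n) ℤ) : Matrix (Fin n) (Fin n) ℤ) = 1 by simp]
  exact rmat_one

lemma WV_one (V : Matrix.GeneralLinearGroup (Fin n) ℤ) :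
    rmat ((V⁻¹ : Matrix.GeneralLinearGroup (Fin n) ℤ) : Matrix (Fin n) (Fin n) ℤ) *
      rmat (V : Matrix (Fin n) (Fin n) ℤ) = 1 := by
  rw [← rmat_mul]
  rw [show ((V⁻¹ : Matrix.GeneralLinearGroup (Fin n) ℤ) : Matrix (Fin n) (Fin n) ℤ) *
      (V : Matrix (Fin n) (Fin n) ℤ) = 1 by simp]
  exact rmat_one

/-- representation of an arbitrary element of P -/
lemma P_rep (s : Fin r → ℤ) (q : P n r s) :
    ∃ (u : Fin (n - r) → ℝ) (m : Fin r → ℤ),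
      q = (fun j => (u j : AddCircle (1 : ℝ)), fun k => ((m k : ZMod (s k).natAbs))) := by
  have hu : ∀ j, ∃ uj : ℝ, (uj : AddCircle (1 : ℝ)) = q.1 j := fun j => Quotient.exists_rep _
  have hm : ∀ k, ∃ mk : ℤ, ((mk : ZMod (s k).natAbs)) = q.2 k := fun k =>
    ZMod.intCast_surjective _
  choose u hu using hu
  choose m hm using hm
  refine ⟨u, m, ?_⟩
  ext j
  · exact (hu j).symm
  · exact (hm j).symm

lemma psi_mem_G {A : Matrix (Fin p) (Fin n) ℤ}
    {U : Matrix.GeneralLinearGroup (Fin p) ℤ} {V : Matrix.GeneralLinearGroup (Fin n) ℤ}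
    {S : Matrix (Fin p) (Fin n) ℤ}
    (hS : S = (U : Matrix (Fin p) (Fin p) ℤ) * A * (V : Matrix (Fin n) (Fin n) ℤ))
    (hdiag : ∀ (i : Fin p) (j : Fin n), (i : ℕ) ≠ (j : ℕ) → S i j = 0)
    (hrp : r ≤ p) (hrn : r ≤ n) (s : Fin r → ℤ) (hs : ∀ k, s k ≠ 0)
    (hSs : ∀ k : Fin r, S ⟨k, lt_of_lt_of_le k.2 hrp⟩ ⟨k, lt_of_lt_of_le k.2 hrn⟩ = s k)
    (hzero : ∀ (i : Fin p) (j : Fin n), (i : ℕ) = (j : ℕ) → r ≤ (i : ℕ) → S i j = 0)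
    (q : P n r s) : psi V hrn s hs q ∈ G p n A := by
  obtain ⟨u, m, rfl⟩ := P_rep s q
  rw [psi_apply_mk]
  have hz : ∀ k : Fin r, ∃ mk : ℤ, (s k : ℝ) * zvec s u m (idxF hrn k) = mk := by
    intro k
    refine ⟨m k, ?_⟩
    rw [zvec_idxF]
    rw [mul_div_cancel₀ _ (by exact_mod_cast hs k)]
  exact ⟨_, preG_backward hS hdiag hrp hrn s hSs hzero hz, rfl⟩

lemma psi_injective {V : Matrix.GeneralLinearGroup (Fin n) ℤ}
    (hrn : r ≤ n) (s : Fin r → ℤ) (hs : ∀ k, s k ≠ 0) :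
    Function.Injective (psi (n := n) V hrn s hs) := by
  rw [injective_iff_map_eq_zero]
  intro q hq
  obtain ⟨u, m, rfl⟩ := P_rep s q
  rw [psi_apply_mk] at hq
  have hlat : (rmat (V : Matrix (Fin n) (Fin n) ℤ)).mulVec (zvec s u m) ∈ intLattice n :=
    (QuotientAddGroup.eq_zero_iff _).mp hq
  have hz : zvec s u m ∈ intLattice n := by
    have : zvec s u m =
        (rmat ((V⁻¹ : Matrix.GeneralLinearGroup (Fin n) ℤ) : Matrix (Fin n) (Fin n) ℤ)).mulVec
          ((rmat (V : Matrix (Fin n) (Fin n) ℤ)).mulVec (zvec s u m)) := by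
      rw [Matrix.mulVec_mulVec, WV_one, Matrix.one_mulVec]
    rw [this]
    exact mulVec_int_mem _ hlat
  have h1 : (fun j => (u j : AddCircle (1 : ℝ))) = (0 : Fin (n - r) → AddCircle (1 : ℝ)) := by
    funext j
    obtain ⟨c, hc⟩ := hz (idxT j)
    rw [zvec_idxT] at hc
    have : u j ∈ AddSubgroup.zmultiples (1 : ℝ) :=
      AddSubgroup.mem_zmultiples_iff.mpr ⟨c, by simp [hc]⟩
    exact (QuotientAddGroup.eq_zero_iff _).mpr this
  have h2 : (fun k => ((m k : ZMod (s k).natAbs))) =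
      (0 : (k : Fin r) → ZMod (s k).natAbs) := by
    funext k
    obtain ⟨c, hc⟩ := hz (idxF hrn k)
    rw [zvec_idxF] at hc
    have hmk : m k = s k * c := by
      have hsk : (s k : ℝ) ≠ 0 := by exact_mod_cast hs k
      have : (m k : ℝ) = (s k : ℝ) * (c : ℝ) := by
        field_simp at hc
        linarith [hc]
      exact_mod_cast this
    have : ((s k).natAbs : ℤ) ∣ m k := Int.natAbs_dvd.mpr ⟨c, hmk⟩
    exact (ZMod.intCast_zmod_eq_zero_iff_dvd _ _).mpr this
  rw [Prod.ext_iff]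
  exact ⟨h1, h2⟩

/-- The inverse-direction map on representatives. -/
def Fmap (V : Matrix.GeneralLinearGroup (Fin n) ℤ) (hrn : r ≤ n) (s : Fin r → ℤ)
    (x : Fin n → ℝ) : P n r s :=
  (fun j => ((((rmat ((V⁻¹ : Matrix.GeneralLinearGroup (Fin n) ℤ) :
        Matrix (Fin n) (Fin n) ℤ)).mulVec x) (idxT j) : ℝ) : AddCircle (1 : ℝ)),
   fun k => (((round ((s k : ℝ) *
      ((rmat ((V⁻¹ : Matrix.GeneralLinearGroup (Fin n) ℤ) :
        Matrix (Fin n) (Fin n) ℤ)).mulVec x) (idxF hrn k))) : ℤ) : ZMod (s k).natAbs))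

lemma psi_Fmap {A : Matrix (Fin p) (Fin n) ℤ}
    {U : Matrix.GeneralLinearGroup (Fin p) ℤ} {V : Matrix.GeneralLinearGroup (Fin n) ℤ}
    {S : Matrix (Fin p) (Fin n) ℤ}
    (hS : S = (U : Matrix (Fin p) (Fin p) ℤ) * A * (V : Matrix (Fin n) (Fin n) ℤ))
    (hdiag : ∀ (i : Fin p) (j : Fin n), (i : ℕ) ≠ (j : ℕ) → S i j = 0)
    (hrp : r ≤ p) (hrn : r ≤ n) (s : Fin r → ℤ) (hs : ∀ k, s k ≠ 0)
    (hSs : ∀ k : Fin r, S ⟨k, lt_of_lt_of_le k.2 hrp⟩ ⟨k, lt_of_lt_of_le k.2 hrn⟩ = s k)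
    (hzero : ∀ (i : Fin p) (j : Fin n), (i : ℕ) = (j : ℕ) → r ≤ (i : ℕ) → S i j = 0)
    {x : Fin n → ℝ} (hx : x ∈ preG p n A) :
    psi V hrn s hs (Fmap V hrn s x) = QuotientAddGroup.mk x := by
  set W := rmat ((V⁻¹ : Matrix.GeneralLinearGroup (Fin n) ℤ) : Matrix (Fin n) (Fin n) ℤ) with hW
  choose m hm using fun k => preG_forward hS hdiag hrp hrn s hSs hzero hx k
  have hround : ∀ k : Fin r,
      round ((s k : ℝ) * (W.mulVec x) (idxF hrn k)) = m k := by
    intro k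
    rw [hm k]
    exact round_intCast _
  have hFm : Fmap V hrn s x =
      (fun j => (((W.mulVec x) (idxT j) : ℝ) : AddCircle (1 : ℝ)),
       fun k => ((m k : ZMod (s k).natAbs))) := by
    rw [Fmap]
    congr 1
    funext k
    rw [hround k]
  rw [hFm, psi_apply_mk]
  have hzW : zvec s (fun j => (W.mulVec x) (idxT j)) m = W.mulVec x := by
    funext i
    by_cases h : (i : ℕ) < r
    · have hidx : i = idxF hrn ⟨(i : ℕ), h⟩ := by rw [Fin.ext_iff]; rfl
      rw [hidx, zvec_idxF]
      have hsk : (s ⟨(i : ℕ), h⟩ : ℝ) ≠ 0 := by exact_mod_cast hs _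
      rw [div_eq_iff hsk]
      exact ((mul_comm _ _).trans (hm ⟨(i : ℕ), h⟩)).symm
    · have hidx : i = idxT (⟨(i : ℕ) - r, by have := i.2; omega⟩ : Fin (n - r)) := by
        rw [Fin.ext_iff]; show (i : ℕ) = r + ((i : ℕ) - r); omega
      rw [hidx, zvec_idxT]
  rw [hzW, Matrix.mulVec_mulVec, VW_one, Matrix.one_mulVec]

end
end SNFaux

namespace SNFaux
noncomputable section
open Matrix QuotientAddGroup

variable {p n r : ℕ}

/-- the canonical projection from preG onto G -/
def rho (p n : ℕ) (A : Matrix (Fin p) (Fin n) ℤ) (x : ↥(preG p n A)) : ↥(G p n A) :=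
  ⟨QuotientAddGroup.mk x.val, ⟨x.val, x.2, rfl⟩⟩

lemma isQuotientMap_rho (A : Matrix (Fin p) (Fin n) ℤ) :
    Topology.IsQuotientMap (rho p n A) := by
  apply IsOpenMap.isQuotientMap
  · intro O hO
    obtain ⟨t, ht, rfl⟩ := isOpen_induced_iff.mp hO
    have himg : rho p n A '' (Subtype.val ⁻¹' t) =
        Subtype.val ⁻¹' (QuotientAddGroup.mk '' t : Set (Torus n)) := by
      ext y
      constructor
      · rintro ⟨x, hx, rfl⟩
        exact ⟨x.val, hx, rfl⟩
      · rintro ⟨x', hx't, hx'y⟩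
        obtain ⟨h, hmem, hhy⟩ := y.2
        have hh : QuotientAddGroup.mk (s := intLattice n) h =
            QuotientAddGroup.mk (s := intLattice n) x' := hhy.trans hx'y.symm
        have : -h + x' ∈ intLattice n := QuotientAddGroup.eq.mp hh
        have hx'mem : x' ∈ preG p n A := by
          have : x' = h + (-h + x') := by abel
          rw [this]
          exact AddSubgroup.add_mem _ hmem (intLattice_le_preG A ‹-h + x' ∈ intLattice n›)
        exact ⟨⟨x', hx'mem⟩, hx't, Subtype.ext hx'y⟩
    rw [himg]
    exact (QuotientAddGroup.isOpenMap_coe t ht).preimage continuous_subtype_val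
  · exact Continuous.subtype_mk (continuous_torus_mk.comp continuous_subtype_val) _
  · rintro ⟨y, hy⟩
    obtain ⟨x, hx, hxy⟩ := hy
    exact ⟨⟨x, hx⟩, Subtype.ext hxy⟩

lemma continuous_Fsub {A : Matrix (Fin p) (Fin n) ℤ}
    {U : Matrix.GeneralLinearGroup (Fin p) ℤ} {V : Matrix.GeneralLinearGroup (Fin n) ℤ}
    {S : Matrix (Fin p) (Fin n) ℤ}
    (hS : S = (U : Matrix (Fin p) (Fin p) ℤ) * A * (V : Matrix (Fin n) (Fin n) ℤ))
    (hdiag : ∀ (i : Fin p) (j : Fin n), (i : ℕ) ≠ (j : ℕ) → S i j = 0)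
    (hrp : r ≤ p) (hrn : r ≤ n) (s : Fin r → ℤ) (hs : ∀ k, s k ≠ 0)
    (hSs : ∀ k : Fin r, S ⟨k, lt_of_lt_of_le k.2 hrp⟩ ⟨k, lt_of_lt_of_le k.2 hrn⟩ = s k)
    (hzero : ∀ (i : Fin p) (j : Fin n), (i : ℕ) = (j : ℕ) → r ≤ (i : ℕ) → S i j = 0) :
    Continuous fun x : ↥(preG p n A) => Fmap V hrn s (x : Fin n → ℝ) := by
  set W := rmat ((V⁻¹ : Matrix.GeneralLinearGroup (Fin n) ℤ) : Matrix (Fin n) (Fin n) ℤ) with hW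
  apply Continuous.prodMk
  · apply continuous_pi
    intro j
    exact continuous_quot_mk.comp
      ((continuous_apply (idxT j)).comp ((continuous_mulVec W).comp continuous_subtype_val))
  · apply continuous_pi
    intro k
    have hg : Continuous fun x : ↥(preG p n A) =>
        (s k : ℝ) * (W.mulVec (x : Fin n → ℝ)) (idxF hrn k) :=
      continuous_const.mul
        ((continuous_apply (idxF hrn k)).comp ((continuous_mulVec W).comp continuous_subtype_val))
    rw [continuous_iff_continuousAt]
    intro x₀
    obtain ⟨m₀, hm₀⟩ := preG_forward hS hdiag hrp hrn s hSs hzero x₀.2 k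
    rw [← hW] at hm₀
    have hx₀mem : x₀ ∈ {x : ↥(preG p n A) |
        (s k : ℝ) * (W.mulVec (x : Fin n → ℝ)) (idxF hrn k) ∈
          Set.Ioo ((m₀ : ℝ) - 1) ((m₀ : ℝ) + 1)} := by
      simp only [Set.mem_setOf_eq, hm₀]
      constructor <;> [linarith; linarith]
    have hopen : IsOpen {x : ↥(preG p n A) |
        (s k : ℝ) * (W.mulVec (x : Fin n → ℝ)) (idxF hrn k) ∈
          Set.Ioo ((m₀ : ℝ) - 1) ((m₀ : ℝ) + 1)} := hg.isOpen_preimage _ isOpen_Ioo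
    have hev : ∀ᶠ x : ↥(preG p n A) in nhds x₀,
        ((round ((s k : ℝ) * (W.mulVec (x : Fin n → ℝ)) (idxF hrn k)) : ℤ) :
          ZMod (s k).natAbs) =
        ((round ((s k : ℝ) * (W.mulVec (x₀ : Fin n → ℝ)) (idxF hrn k)) : ℤ) :
          ZMod (s k).natAbs) := by
      refine Filter.eventually_of_mem (hopen.mem_nhds hx₀mem) ?_
      intro x hx
      obtain ⟨mx, hmx⟩ := preG_forward hS hdiag hrp hrn s hSs hzero x.2 k
      rw [← hW] at hmx
      have hmx01 : mx = m₀ := by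
        simp only [Set.mem_setOf_eq, Set.mem_Ioo] at hx
        rw [hmx] at hx
        have h1 : (m₀ : ℝ) - 1 < (mx : ℝ) := hx.1
        have h2 : (mx : ℝ) < (m₀ : ℝ) + 1 := hx.2
        have h1' : m₀ - 1 < mx := by exact_mod_cast h1
        have h2' : mx < m₀ + 1 := by exact_mod_cast h2
        omega
      rw [hmx, hm₀, round_intCast, round_intCast, hmx01]
    exact Filter.EventuallyEq.continuousAt hev

/-- the assembled result -/
lemma main (p n r : ℕ) (A : Matrix (Fin p) (Fin n) ℤ)
    (U : Matrix.GeneralLinearGroup (Fin p) ℤ) (V : Matrix.GeneralLinearGroup (Fin n) ℤ)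
    (S : Matrix (Fin p) (Fin n) ℤ)
    (hS : S = (U : Matrix (Fin p) (Fin p) ℤ) * A * (V : Matrix (Fin n) (Fin n) ℤ))
    (hdiag : ∀ (i : Fin p) (j : Fin n), (i : ℕ) ≠ (j : ℕ) → S i j = 0)
    (hrp : r ≤ p) (hrn : r ≤ n)
    (s : Fin r → ℤ) (hs : ∀ k, s k ≠ 0)
    (hSs : ∀ k : Fin r, S ⟨k, lt_of_lt_of_le k.2 hrp⟩ ⟨k, lt_of_lt_of_le k.2 hrn⟩ = s k)
    (hzero : ∀ (i : Fin p) (j : Fin n), (i : ℕ) = (j : ℕ) → r ≤ (i : ℕ) → S i j = 0) :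
    ∃ e : ↥(G p n A) ≃+
        ((Fin (n - r) → AddCircle (1 : ℝ)) × ((k : Fin r) → ZMod (s k).natAbs)),
      Continuous e ∧ Continuous e.symm := by
  have hmem : ∀ q : P n r s, psi V hrn s hs q ∈ G p n A :=
    psi_mem_G hS hdiag hrp hrn s hs hSs hzero
  set φ : P n r s →+ ↥(G p n A) := (psi V hrn s hs).codRestrict _ hmem with hφ
  have hinj : Function.Injective ⇑φ := by
    intro a b hab
    exact psi_injective hrn s hs (congrArg Subtype.val hab)
  have hsurj : Function.Surjective ⇑φ := by
    rintro ⟨y, hy⟩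
    obtain ⟨x, hxmem, hxy⟩ := hy
    refine ⟨Fmap V hrn s x, Subtype.ext ?_⟩
    show psi V hrn s hs (Fmap V hrn s x) = y
    rw [psi_Fmap hS hdiag hrp hrn s hs hSs hzero hxmem]
    exact hxy
  set e0 : P n r s ≃+ ↥(G p n A) := AddEquiv.ofBijective φ ⟨hinj, hsurj⟩ with he0
  have he0coe : ⇑e0 = ⇑φ := rfl
  have hconte0 : Continuous ⇑e0 := by
    rw [he0coe]
    apply Continuous.subtype_mk
    exact continuous_psi V hrn s hs
  have hconte0symm : Continuous ⇑e0.symm := by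
    rw [(isQuotientMap_rho A).continuous_iff]
    have hcomp : ⇑e0.symm ∘ rho p n A = fun x : ↥(preG p n A) => Fmap V hrn s (x : Fin n → ℝ) := by
      funext x
      apply e0.injective
      rw [Function.comp_apply, AddEquiv.apply_symm_apply]
      apply Subtype.ext
      show (rho p n A x).val = psi V hrn s hs (Fmap V hrn s (x : Fin n → ℝ))
      rw [psi_Fmap hS hdiag hrp hrn s hs hSs hzero x.2]
      rfl
    rw [hcomp]
    exact continuous_Fsub hS hdiag hrp hrn s hs hSs hzero
  exact ⟨e0.symm, hconte0symm, by rw [AddEquiv.symm_symm]; exact hconte0⟩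

end
end SNFaux

/-- if S = U A V is the Smith normal form of the integer matrix A, with
U, V unimodular, S diagonal with nonzero diagonal entries s₁, …, s_r (and the remaining
diagonal entries zero), then the topological group { m ∈ ℝⁿ : A m ∈ ℤᵖ } / ℤⁿ is isomorphic,
as a topological group, to (ℝ/ℤ)^{n-r} × ℤ/s₁ℤ × ⋯ × ℤ/s_rℤ. -/
theorem smith_normal_form_dual_group (p n r : ℕ) (A : Matrix (Fin p) (Fin n) ℤ)
    (U : Matrix.GeneralLinearGroup (Fin p) ℤ) (V : Matrix.GeneralLinearGroup (Fin n) ℤ)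
    (S : Matrix (Fin p) (Fin n) ℤ)
    (hS : S = (U : Matrix (Fin p) (Fin p) ℤ) * A * (V : Matrix (Fin n) (Fin n) ℤ))
    (hdiag : ∀ (i : Fin p) (j : Fin n), (i : ℕ) ≠ (j : ℕ) → S i j = 0)
    (hrp : r ≤ p) (hrn : r ≤ n)
    (s : Fin r → ℤ) (hs : ∀ k, s k ≠ 0)
    (hdvd : ∀ k l : Fin r, k ≤ l → s k ∣ s l)
    (hSs : ∀ k : Fin r, S ⟨k, lt_of_lt_of_le k.2 hrp⟩ ⟨k, lt_of_lt_of_le k.2 hrn⟩ = s k)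
    (hzero : ∀ (i : Fin p) (j : Fin n), (i : ℕ) = (j : ℕ) → r ≤ (i : ℕ) → S i j = 0) :
    ∃ e : ↥(G p n A) ≃+
        ((Fin (n - r) → AddCircle (1 : ℝ)) × ((k : Fin r) → ZMod (s k).natAbs)),
      Continuous e ∧ Continuous e.symm := by
  exact SNFaux.main p n r A U V S hS hdiag hrp hrn s hs hSs hzero
end

section
/- Let D : ℚ⁹ → ℚ³ be the linear map given by the 3 × 9 matrix with rows (−1,−1,−1,−1,−1,−1,0,0,0), (1,1,1,0,0,0,−1,−1,−1), (0,0,0,1,1,1,1,1,1), and consider the two-term chain complex C₁ = ℚ³ ⊕ ℚ⁹ → C₀ = ℚ³ whose differential ∂ is zero on the summand ℚ³ and equals D on the summand ℚ⁹. Then H₀ = C₀ / im ∂ has dimension 1 over ℚ, and H₁ = ker ∂ has dimension 10 over ℚ; in particular the Euler characteristic dim H₀ − dim H₁ equals −9. -/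
/-- The 3 × 9 differential matrix for the reflexive triangle conv{(2,−1),(−1,2),(−1,−1)}. -/
def D : Matrix (Fin 3) (Fin 9) ℚ :=
  !![-1, -1, -1, -1, -1, -1, 0, 0, 0;
      1,  1,  1,  0,  0,  0, -1, -1, -1;
      0,  0,  0,  1,  1,  1,  1,  1,  1]

/-- The differential ∂ : C₁ = ℚ³ ⊕ ℚ⁹ → C₀ = ℚ³, zero on the summand ℚ³ and given by
the matrix D on the summand ℚ⁹. -/
def bnd : ((Fin 3 → ℚ) × (Fin 9 → ℚ)) →ₗ[ℚ] (Fin 3 → ℚ) :=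
  D.mulVecLin ∘ₗ LinearMap.snd ℚ (Fin 3 → ℚ) (Fin 9 → ℚ)

/-- The sum-of-coordinates functional on ℚ³. -/
def sumF : (Fin 3 → ℚ) →ₗ[ℚ] ℚ where
  toFun x := x 0 + x 1 + x 2
  map_add' x y := by simp [Pi.add_apply]; ring
  map_smul' c x := by simp [Pi.smul_apply]; ring

lemma range_bnd : LinearMap.range bnd = LinearMap.ker sumF := by
  apply le_antisymm
  · rintro x ⟨⟨u, v⟩, rfl⟩
    simp only [LinearMap.mem_ker, sumF, bnd, LinearMap.coe_mk, AddHom.coe_mk,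
      LinearMap.coe_comp, Function.comp_apply, LinearMap.snd_apply,
      Matrix.mulVecLin_apply, Matrix.mulVec, dotProduct, D]
    simp [Fin.sum_univ_succ]
    ring
  · intro x hx
    simp only [LinearMap.mem_ker, sumF, LinearMap.coe_mk, AddHom.coe_mk] at hx
    refine ⟨(0, ![x 1, 0, 0, x 2, 0, 0, 0, 0, 0]), ?_⟩
    funext i
    fin_cases i <;>
      simp [bnd, D, Matrix.mulVec, dotProduct, Fin.sum_univ_succ] <;>
      linarith

lemma finrank_range_bnd : Module.finrank ℚ (LinearMap.range bnd) = 2 := by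
  have hsurj : LinearMap.range sumF = ⊤ := by
    rw [LinearMap.range_eq_top]
    intro c
    exact ⟨fun _ => c/3, by simp [sumF]; ring⟩
  have h := LinearMap.finrank_range_add_finrank_ker sumF
  rw [hsurj, range_bnd] at *
  have : Module.finrank ℚ (Fin 3 → ℚ) = 3 := by simp
  have htop : Module.finrank ℚ (⊤ : Submodule ℚ ℚ) = 1 := by simp
  omega

/-- for the two-term chain complex C₁ = ℚ³ ⊕ ℚ⁹ → C₀ = ℚ³ with
differential ∂, the homology H₀ = C₀ / im ∂ has dimension 1 and H₁ = ker ∂ has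
dimension 10; in particular the Euler characteristic dim H₀ − dim H₁ equals −9. -/
theorem homology_of_skeleton_chain_complex :
    Module.finrank ℚ ((Fin 3 → ℚ) ⧸ LinearMap.range bnd) = 1 ∧
    Module.finrank ℚ (LinearMap.ker bnd) = 10 ∧
    (Module.finrank ℚ ((Fin 3 → ℚ) ⧸ LinearMap.range bnd) : ℤ) -
      (Module.finrank ℚ (LinearMap.ker bnd) : ℤ) = -9 := by
  have hq := Submodule.finrank_quotient_add_finrank (LinearMap.range bnd)
  have hk := LinearMap.finrank_range_add_finrank_ker bnd
  have h3 : Module.finrank ℚ (Fin 3 → ℚ) = 3 := by simp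
  have h12 : Module.finrank ℚ ((Fin 3 → ℚ) × (Fin 9 → ℚ)) = 12 := by simp
  rw [finrank_range_bnd, h3] at hq
  rw [finrank_range_bnd, h12] at hk
  refine ⟨by omega, by omega, by omega⟩
end
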